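/- Let ξ be a connected core graph of type (g, n, r), i.e. a connected graph of first Betti number g−1 with n legs and an admissible marking (a distinguished vertex v with a set D of r marked flags adjacent to v) such that no marked flag is a leg, all neutral vertices have valence at least 3, all tadpoles are at the distinguished vertex, and no tadpole has both flags marked. Then n ≤ 3(g−1) + 2(n−r). -/
import Mathlib


/-- A finite graph with a marking, following Payne–Willwacher: a finite nonempty set
of vertices `V`, a finite set of flags (half-edges) `F`, an adjacency map `a`, an
involution `ι` (whose 2-element orbits are edges and whose fixed points are legs),
together with a distinguished vertex `dv` and a set `marked ⊆ a⁻¹(dv)` of marked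
flags. -/
structure MGraph where
  V : Type
  F : Type
  [fintypeV : Fintype V]
  [fintypeF : Fintype F]
  [decV : DecidableEq V]
  [decF : DecidableEq F]
  nonemptyV : Nonempty V
  a : F → V
  ι : F → F
  ι_invol : ∀ f, ι (ι f) = f
  dv : V
  marked : Finset F
  marked_adj : ∀ f ∈ marked, a f = dv

namespace MGraph

attribute [instance] fintypeV fintypeF decV decF

variable (G : MGraph)

/-- The number of legs (fixed flags). -/
noncomputable def numLegs : ℕ := Fintype.card {f : G.F // G.ι f = f}

/-- The number of edges (2-element orbits of the involution). -/
noncomputable def numEdges : ℕ := Fintype.card {f : G.F // G.ι f ≠ f} / 2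

/-- Two vertices are adjacent if some edge joins them. -/
def Adj (v w : G.V) : Prop := ∃ f, G.ι f ≠ f ∧ G.a f = v ∧ G.a (G.ι f) = w

/-- The graph is connected. -/
def Connected : Prop := ∀ v w : G.V, Relation.ReflTransGen G.Adj v w

/-- Admissibility of the marking: stability (neutral vertices have valence ≥ 3),
no neutral tadpoles, and no doubly-marked edges. -/
def Admissible : Prop :=
  (∀ w : G.V, w ≠ G.dv → 3 ≤ Fintype.card {f : G.F // G.a f = w}) ∧
  (∀ f : G.F, G.ι f ≠ f → G.a f = G.a (G.ι f) → G.a f = G.dv) ∧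
  (∀ f ∈ G.marked, G.ι f ∈ G.marked → G.ι f = f)

/-- A core graph has no marked legs. -/
def NoMarkedLegs : Prop := ∀ f ∈ G.marked, G.ι f ≠ f

/-- The graph is of type `(g, n, r)`: first Betti number `g − 1`
(i.e. `|E| − |V| + 1 = g − 1`, written additively), `n` legs and `r` marked flags. -/
def IsType (g n r : ℕ) : Prop :=
  G.numEdges + 2 = Fintype.card G.V + g ∧ G.numLegs = n ∧ G.marked.card = r

end MGraph

lemma even_card_invol {F : Type} [DecidableEq F] (ι : F → F) (hι : ∀ f, ι (ι f) = f) :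
    ∀ (S : Finset F), (∀ f ∈ S, ι f ∈ S) → (∀ f ∈ S, ι f ≠ f) → Even S.card := by
  intro S
  induction S using Finset.strongInduction with
  | _ S ih =>
    intro hcl hnf
    rcases S.eq_empty_or_nonempty with rfl | ⟨f, hf⟩
    · simp
    · have hιf : ι f ∈ S := hcl f hf
      have hne : ι f ≠ f := hnf f hf
      set T := (S.erase f).erase (ι f) with hT
      have hTsub : T ⊂ S := by
        apply Finset.ssubset_of_subset_of_ssubset
        · exact Finset.erase_subset _ _
        · exact Finset.erase_ssubset hf
      have hcard : S.card = T.card + 2 := by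
        rw [hT, Finset.card_erase_of_mem (by simp [Finset.mem_erase, hne, hιf]),
          Finset.card_erase_of_mem hf]
        have h1 : 1 ≤ S.card := Finset.card_pos.mpr ⟨f, hf⟩
        have h2 : 2 ≤ S.card := by
          have := Finset.one_lt_card.mpr ⟨f, hf, ι f, hιf, hne.symm⟩
          omega
        omega
      have hTcl : ∀ x ∈ T, ι x ∈ T := by
        intro x hx
        simp only [hT, Finset.mem_erase] at hx ⊢
        refine ⟨?_, ?_, hcl x hx.2.2⟩
        · exact fun h => hx.2.1 (by rw [← hι x, h, hι])
        · exact fun h => hx.1 (by rw [← h, hι])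
      have hTnf : ∀ x ∈ T, ι x ≠ x := fun x hx =>
        hnf x (Finset.mem_of_mem_erase (Finset.mem_of_mem_erase hx))
      obtain ⟨k, hk⟩ := ih T hTsub hTcl hTnf
      exact ⟨k + 1, by omega⟩

/-- a connected core graph (admissible marking, no marked legs) of type
`(g, n, r)` satisfies `n ≤ 3(g−1) + 2(n−r)`. -/
theorem core_graph_leg_bound (G : MGraph) (g n r : ℕ)
    (hconn : G.Connected) (hadm : G.Admissible) (hcore : G.NoMarkedLegs)
    (htype : G.IsType g n r) :
    (n : ℤ) ≤ 3 * ((g : ℤ) - 1) + 2 * ((n : ℤ) - (r : ℤ)) := by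
  classical
  obtain ⟨htE, htL, htM⟩ := htype
  obtain ⟨hval, -, hdbl⟩ := hadm
  set S : Finset G.F := Finset.univ.filter (fun f => G.ι f ≠ f) with hS
  -- S is closed under ι and has no fixed points, hence even cardinality
  have hScl : ∀ f ∈ S, G.ι f ∈ S := by
    intro f hf
    simp only [hS, Finset.mem_filter, Finset.mem_univ, true_and] at hf ⊢
    intro h
    rw [G.ι_invol f] at h
    exact hf h.symm
  have hSnf : ∀ f ∈ S, G.ι f ≠ f := by
    intro f hf
    simpa [hS] using hf
  have hEven : Even S.card := even_card_invol G.ι G.ι_invol S hScl hSnf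
  have hSsub : Fintype.card {f : G.F // G.ι f ≠ f} = S.card := by
    rw [hS, Fintype.card_subtype]
  have hE2 : 2 * G.numEdges = S.card := by
    obtain ⟨k, hk⟩ := hEven
    rw [MGraph.numEdges, hSsub, hk]
    omega
  -- |F| = |S| + numLegs
  have hFcard : Fintype.card G.F = S.card + G.numLegs := by
    rw [MGraph.numLegs, Fintype.card_subtype, hS]
    have h := Finset.card_filter_add_card_filter_not
      (s := (Finset.univ : Finset G.F)) (p := fun f => G.ι f = f)
    simp only [ne_eq, Finset.card_univ] at h ⊢
    omega
  -- 2r ≤ |S|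
  have hinj : Function.Injective G.ι := Function.Involutive.injective G.ι_invol
  have hMsub : G.marked ⊆ S := by
    intro f hf
    simp only [hS, Finset.mem_filter, Finset.mem_univ, true_and]
    exact hcore f hf
  have hMimg : G.marked.image G.ι ⊆ S := fun x hx => by
    obtain ⟨m, hm, rfl⟩ := Finset.mem_image.mp hx
    exact hScl m (hMsub hm)
  have hdisj : Disjoint G.marked (G.marked.image G.ι) := by
    rw [Finset.disjoint_left]
    intro x hx hx'
    obtain ⟨m, hm, rfl⟩ := Finset.mem_image.mp hx'
    exact hcore m hm (hdbl m hm hx)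
  have h2r : 2 * G.marked.card ≤ S.card := by
    have hu : (G.marked ∪ G.marked.image G.ι) ⊆ S := Finset.union_subset hMsub hMimg
    have := Finset.card_le_card hu
    rw [Finset.card_union_of_disjoint hdisj, Finset.card_image_of_injective _ hinj] at this
    omega
  -- valence bound: 3(|V|-1) + r ≤ |F|
  have hfib : Fintype.card G.F =
      ∑ v : G.V, (Finset.univ.filter (fun f => G.a f = v)).card := by
    rw [← Finset.card_univ]
    exact Finset.card_eq_sum_card_fiberwise (fun f _ => Finset.mem_univ (G.a f))
  have hdvfib : G.marked.card ≤ (Finset.univ.filter (fun f => G.a f = G.dv)).card := by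
    apply Finset.card_le_card
    intro f hf
    simp only [Finset.mem_filter, Finset.mem_univ, true_and]
    exact G.marked_adj f hf
  have hrest : 3 * (Fintype.card G.V - 1) ≤
      ∑ v ∈ Finset.univ.erase G.dv, (Finset.univ.filter (fun f => G.a f = v)).card := by
    have hc : (Finset.univ.erase G.dv).card = Fintype.card G.V - 1 := by
      rw [Finset.card_erase_of_mem (Finset.mem_univ _), Finset.card_univ]
    have hb := Finset.card_nsmul_le_sum (Finset.univ.erase G.dv)
      (fun v => (Finset.univ.filter (fun f => G.a f = v)).card) 3 ?_
    · rw [smul_eq_mul, hc] at hb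
      omega
    · intro w hw
      have hwne : w ≠ G.dv := (Finset.mem_erase.mp hw).1
      have := hval w hwne
      rwa [Fintype.card_subtype] at this
  have hsplit : Fintype.card G.F =
      (Finset.univ.filter (fun f => G.a f = G.dv)).card +
      ∑ v ∈ Finset.univ.erase G.dv, (Finset.univ.filter (fun f => G.a f = v)).card := by
    rw [hfib, ← Finset.add_sum_erase Finset.univ _ (Finset.mem_univ G.dv)]
  have hval3 : G.marked.card + 3 * (Fintype.card G.V - 1) ≤ Fintype.card G.F := by
    rw [hsplit]; exact Nat.add_le_add hdvfib hrest
  have hV1 : 1 ≤ Fintype.card G.V := Fintype.card_pos_iff.mpr G.nonemptyV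
  omega
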